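/- Let cr be an isomorphism-invariant function from finite simple graphs to nonnegative reals such that cr(G) = cr(G') whenever G' is obtained from G by subdividing every edge once. Let X be a class of graphs closed under taking subdivisions, and suppose cr(G) ≤ c · Σ_{vw∈E(G)} deg(v)·deg(w) for every G ∈ X. Then cr(G) ≤ 2c · Σ_{v∈V(G)} deg(v)² for every G ∈ X. -/

import Mathlib

open Finset

universe u

variable {V : Type u}

/-- The graph obtained from `G` by subdividing every edge exactly once. -/
def subdivision (G : SimpleGraph V) : SimpleGraph (V ⊕ G.edgeSet) where
  Adj x y :=
    match x, y with
    | Sum.inl v, Sum.inr e => v ∈ (e : Sym2 V)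
    | Sum.inr e, Sum.inl v => v ∈ (e : Sym2 V)
    | _, _ => False
  symm := by constructor; rintro (v | e) (w | f) h <;> simp_all
  loopless := by constructor; rintro (v | e) h <;> simp_all

instance (G : SimpleGraph V) [DecidableEq V] : DecidableRel (subdivision G).Adj := by
  rintro (v | e) (w | f)
  · exact inferInstanceAs (Decidable False)
  · exact inferInstanceAs (Decidable (v ∈ (f : Sym2 V)))
  · exact inferInstanceAs (Decidable (w ∈ (e : Sym2 V)))
  · exact inferInstanceAs (Decidable False)

variable [Fintype V] [DecidableEq V] (G : SimpleGraph V) [DecidableRel G.Adj]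

lemma deg_inl (v : V) : (subdivision G).degree (Sum.inl v) = G.degree v := by
  have h2 : G.degree v = #(G.incidenceFinset v) :=
    (SimpleGraph.card_incidenceFinset_eq_degree _ _).symm
  rw [h2, ← SimpleGraph.card_neighborFinset_eq_degree]
  apply Finset.card_bij (fun x _ => match x with
    | Sum.inl _ => s(v, v)
    | Sum.inr e => (e : Sym2 V))
  · rintro (w | e) h
    · rw [SimpleGraph.mem_neighborFinset] at h; simp [subdivision] at h
    · rw [SimpleGraph.mem_neighborFinset] at h; simp only [subdivision] at h
      simp [SimpleGraph.mem_incidenceFinset, SimpleGraph.incidenceSet, e.2, h]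
  · rintro (w | e) h1 (w' | e') h2 h
    · exact absurd h1 (by rw [SimpleGraph.mem_neighborFinset]; simp [subdivision])
    · exact absurd h1 (by rw [SimpleGraph.mem_neighborFinset]; simp [subdivision])
    · exact absurd h2 (by rw [SimpleGraph.mem_neighborFinset]; simp [subdivision])
    · simp_all [Subtype.ext_iff]
  · intro e he
    simp only [SimpleGraph.mem_incidenceFinset, SimpleGraph.incidenceSet, Set.mem_sep_iff] at he
    exact ⟨Sum.inr ⟨e, he.1⟩, by rw [SimpleGraph.mem_neighborFinset]; simp [subdivision, he.2], rfl⟩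

lemma deg_inr (e : G.edgeSet) : (subdivision G).degree (Sum.inr e) = 2 := by
  rw [← SimpleGraph.card_neighborFinset_eq_degree]
  obtain ⟨e, he⟩ := e
  induction e with
  | _ a b =>
    have hab : a ≠ b := (SimpleGraph.mem_edgeSet G).mp he |>.ne
    have : (subdivision G).neighborFinset (Sum.inr ⟨s(a,b), he⟩) = {Sum.inl a, Sum.inl b} := by
      ext x; rw [SimpleGraph.mem_neighborFinset]
      rcases x with v | f <;>
        simp [SimpleGraph.mem_neighborFinset, subdivision, Sym2.mem_iff]
    rw [this, Finset.card_insert_of_notMem (by simp [hab]), Finset.card_singleton]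

lemma card_inc (v : V) :
    #(univ.filter fun e : G.edgeSet => v ∈ (e : Sym2 V)) = G.degree v := by
  rw [← SimpleGraph.card_incidenceFinset_eq_degree]
  refine Finset.card_bij (fun e _ => (e : Sym2 V)) ?_ ?_ ?_
  · intro e he
    simp only [mem_filter, mem_univ, true_and] at he
    simp [SimpleGraph.mem_incidenceFinset, SimpleGraph.incidenceSet, e.2, he]
  · intro e _ e' _ h
    exact Subtype.ext h
  · intro e he
    simp only [SimpleGraph.mem_incidenceFinset, SimpleGraph.incidenceSet,
      Set.mem_sep_iff] at he
    exact ⟨⟨e, he.1⟩, by simp [he.2], rfl⟩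

lemma sum_subdiv :
    (∑ e ∈ (subdivision G).edgeFinset,
      Sym2.lift ⟨fun x y => (subdivision G).degree x * (subdivision G).degree y,
        fun _ _ => Nat.mul_comm _ _⟩ e)
      = 2 * ∑ v : V, (G.degree v) ^ 2 := by
  have key : (∑ e ∈ (subdivision G).edgeFinset,
      Sym2.lift ⟨fun x y => (subdivision G).degree x * (subdivision G).degree y,
        fun _ _ => Nat.mul_comm _ _⟩ e)
      = ∑ p ∈ (univ.filter fun p : V × G.edgeSet => p.1 ∈ (p.2 : Sym2 V)),
          G.degree p.1 * 2 := by
    refine (Finset.sum_bij (fun p _ => s(Sum.inl p.1, Sum.inr p.2)) ?_ ?_ ?_ ?_).symm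
    · intro p hp
      simp only [mem_filter, mem_univ, true_and] at hp
      rw [SimpleGraph.mem_edgeFinset]; simpa [subdivision] using hp
    · intro p _ q _ h
      simp only [Sym2.eq_iff] at h
      rcases h with ⟨h1, h2⟩ | ⟨h1, h2⟩
      · exact Prod.ext (Sum.inl.inj h1) (Sum.inr.inj h2)
      · exact absurd h1 (by simp)
    · intro e he
      induction e with
      | _ x y =>
        rw [SimpleGraph.mem_edgeFinset, SimpleGraph.mem_edgeSet] at he
        rcases x with v | f <;> rcases y with w | g
        · exact absurd he (by simp [subdivision])
        · exact ⟨(v, g), by simpa [subdivision] using he, rfl⟩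
        · exact ⟨(w, f), by simpa [subdivision] using he, Sym2.eq_swap⟩
        · exact absurd he (by simp [subdivision])
    · intro p hp
      simp [Sym2.lift, deg_inl, deg_inr]
  rw [key]
  rw [Finset.sum_filter]
  rw [Fintype.sum_prod_type]
  have : ∀ v : V, (∑ e : G.edgeSet, if v ∈ (e : Sym2 V) then G.degree v * 2 else 0)
      = 2 * G.degree v ^ 2 := by
    intro v
    rw [← Finset.sum_filter]
    rw [Finset.sum_const, card_inc, smul_eq_mul]
    ring
  rw [Finset.sum_congr rfl fun v _ => this v, Finset.mul_sum]


/-- Let `cr` be an isomorphism-invariant graph parameter with `cr(G) = cr(G')` whenever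
`G'` is obtained from `G` by subdividing every edge once, let `X` be a class of graphs
closed under subdivisions, and suppose `cr(G) ≤ c · Σ_{vw∈E(G)} deg(v)·deg(w)` on `X`.
Then `cr(G) ≤ 2c · Σ_{v∈V(G)} deg(v)²` on `X`. -/
theorem stmt_7
    (cr : ∀ {W : Type u} [Fintype W] [DecidableEq W] (G : SimpleGraph W)
      [DecidableRel G.Adj], ℝ)
    (X : ∀ {W : Type u} [Fintype W] [DecidableEq W] (G : SimpleGraph W)
      [DecidableRel G.Adj], Prop)
    (c : ℝ) (hc : 0 ≤ c)
    (cr_nonneg : ∀ {W : Type u} [Fintype W] [DecidableEq W] (G : SimpleGraph W)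
      [DecidableRel G.Adj], 0 ≤ cr G)
    (hX_subdiv : ∀ {W : Type u} [Fintype W] [DecidableEq W] (G : SimpleGraph W)
      [DecidableRel G.Adj], X G → X (subdivision G))
    (hcr_subdiv : ∀ {W : Type u} [Fintype W] [DecidableEq W] (G : SimpleGraph W)
      [DecidableRel G.Adj], cr (subdivision G) = cr G)
    (hbound : ∀ {W : Type u} [Fintype W] [DecidableEq W] (G : SimpleGraph W)
      [DecidableRel G.Adj], X G →
      cr G ≤ c * ((∑ e ∈ G.edgeFinset,
        Sym2.lift ⟨fun v w => G.degree v * G.degree w, fun _ _ => Nat.mul_comm _ _⟩ e : ℕ) : ℝ))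
    {W : Type u} [Fintype W] [DecidableEq W] (G : SimpleGraph W) [DecidableRel G.Adj]
    (hG : X G) :
    cr G ≤ 2 * c * ((∑ v : W, (G.degree v) ^ 2 : ℕ) : ℝ) := by
  have h1 := hbound (subdivision G) (hX_subdiv G hG)
  rw [hcr_subdiv G, sum_subdiv G] at h1
  calc cr G ≤ c * ((2 * ∑ v : W, G.degree v ^ 2 : ℕ) : ℝ) := h1
    _ = 2 * c * ((∑ v : W, (G.degree v) ^ 2 : ℕ) : ℝ) := by push_cast; ring
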